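/- arXiv:1304.5768 — 2 statements merged into one kernel-verified Lean document; each statement's English description precedes it below -/
import Mathlib

section
/- Under Assumptions (K2) on κ and (L) on ℓ, for every θ ∈ ℝ^d, ρ > 0, α ≥ 0, c > 0, every measurable h : ℝ^d → ℝ^m with |h(u)| ≤ c|u|^α for all u, and every μ ∈ ℝ, there exist C < ∞ and τ₀ > 0 such that for all 0 < τ ≤ τ₀, | ∫_{{u : τ|u| > ρ}} h(τu) exp(ℓ(θ+τu)−ℓ(θ)) κ(u) du | ≤ C τ^μ. -/
open MeasureTheory Real

noncomputable section

/-- L¹ norm of a vector in ℝ^n. -/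
def l1 {n : ℕ} (v : Fin n → ℝ) : ℝ := ∑ i, |v i|

lemma l1_nonneg {n : ℕ} (v : Fin n → ℝ) : 0 ≤ l1 v :=
  Finset.sum_nonneg fun _ _ => abs_nonneg _

lemma norm_le_l1 {n : ℕ} (v : Fin n → ℝ) : ‖v‖ ≤ l1 v := by
  rw [pi_norm_le_iff_of_nonneg (l1_nonneg v)]
  intro i
  rw [Real.norm_eq_abs]
  exact Finset.single_le_sum (f := fun j => |v j|) (fun j _ => abs_nonneg _) (Finset.mem_univ i)

lemma l1_le_card {n : ℕ} (v : Fin n → ℝ) : l1 v ≤ n * ‖v‖ := by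
  calc l1 v = ∑ i, |v i| := rfl
    _ ≤ ∑ _i : Fin n, ‖v‖ := Finset.sum_le_sum fun i _ => by
        rw [← Real.norm_eq_abs]; exact norm_le_pi_norm v i
    _ = n * ‖v‖ := by simp [Finset.sum_const, Finset.card_univ]

lemma l1_smul {n : ℕ} (a : ℝ) (v : Fin n → ℝ) : l1 (a • v) = |a| * l1 v := by
  simp [l1, Pi.smul_apply, smul_eq_mul, abs_mul, Finset.mul_sum]

lemma l1_measurable {n : ℕ} : Measurable (l1 (n := n)) :=
  Finset.measurable_sum Finset.univ fun i _ => (measurable_pi_apply i).abs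

set_option maxHeartbeats 1000000 in
/-- Tail estimate for the unnormalized posterior integral: under (K2) and (L), the
integral over `{τ|u| > ρ}` of `h(τu) exp(ℓ(θ+τu)−ℓ(θ)) κ(u)` is `O(τ^μ)` for every
`μ ∈ ℝ`. -/
theorem stmt_11 {d m : ℕ} (hd : 1 ≤ d)
    (κ : (Fin d → ℝ) → ℝ) (ℓ : (Fin d → ℝ) → ℝ)
    (hκ_meas : Measurable κ) (hκ_nonneg : ∀ u, 0 ≤ κ u)
    (hℓ_meas : Measurable ℓ)
    (γ δ M : ℝ) (hγ : 0 < γ) (hδ : 0 < δ) (hM : 0 < M)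
    -- (K2)
    (hκ_tail : ∀ u : Fin d → ℝ, M < l1 u → κ u < Real.exp (-γ * l1 u ^ δ))
    -- (L)
    (hℓ_growth : ∀ θ : Fin d → ℝ, ∃ η ε D : ℝ, 0 < η ∧ η < δ ∧ 0 < ε ∧ 0 < D ∧
      ∀ u : Fin d → ℝ, Real.exp (ℓ (θ + u)) ≤ D * Real.exp (ε * l1 u ^ η))
    (θ : Fin d → ℝ) (ρ α c : ℝ) (hρ : 0 < ρ) (hα : 0 ≤ α) (hc : 0 < c)
    (h : (Fin d → ℝ) → Fin m → ℝ) (hh_meas : Measurable h)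
    (hh : ∀ u, l1 (h u) ≤ c * l1 u ^ α) :
    ∀ μ : ℝ, ∃ C τ₀ : ℝ, 0 < τ₀ ∧ ∀ τ : ℝ, 0 < τ → τ ≤ τ₀ →
      l1 (∫ u in {u : Fin d → ℝ | ρ < τ * l1 u},
            (Real.exp (ℓ (θ + τ • u) - ℓ θ) * κ u) • h (τ • u))
        ≤ C * τ ^ μ := by
  intro μ
  obtain ⟨η, ε, D, hη0, hηδ, hε, hD, hL⟩ := hℓ_growth θ
  set N : ℝ := max μ 0 with hNdef
  have hN0 : 0 ≤ N := le_max_right μ 0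
  have hμN : μ ≤ N := le_max_left μ 0
  set r : ℝ := (d : ℝ) + 1 with hrdef
  have hr0 : 0 < r := by positivity
  set n : ℕ := ⌈(α + r + N) / δ⌉₊ with hndef
  have hn : α + r + N ≤ δ * n := by
    have h1 : (α + r + N) / δ ≤ (n : ℝ) := Nat.le_ceil _
    calc α + r + N = ((α + r + N) / δ) * δ := by field_simp
      _ ≤ (n : ℝ) * δ := mul_le_mul_of_nonneg_right h1 hδ.le
      _ = δ * n := mul_comm _ _
  have hδη : 0 < δ - η := sub_pos.mpr hηδ
  set t₁ : ℝ := max 1 (max M ((2 * ε / γ) ^ (1 / (δ - η)))) with ht₁def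
  have ht₁1 : 1 ≤ t₁ := le_max_left _ _
  have ht₁0 : 0 < t₁ := lt_of_lt_of_le one_pos ht₁1
  set K' : ℝ := c * D * Real.exp (-ℓ θ) * ((n.factorial : ℕ) : ℝ) * (2 / γ) ^ n with hK'def
  have hK'0 : 0 ≤ K' := by positivity
  set C₁ : ℝ := K' * 2 ^ r * ρ ^ (-N) with hC₁def
  have hC₁0 : 0 ≤ C₁ := by positivity
  set I : ℝ := ∫ u : Fin d → ℝ, (1 + ‖u‖) ^ (-r) with hIdef
  have hint : Integrable (fun u : Fin d → ℝ => (1 + ‖u‖) ^ (-r)) := by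
    apply integrable_one_add_norm (E := Fin d → ℝ)
    rw [Module.finrank_fin_fun]
    exact lt_add_one _
  have hI0 : 0 ≤ I := integral_nonneg fun u => Real.rpow_nonneg (by positivity) _
  refine ⟨(m : ℝ) * C₁ * I, min 1 (ρ / t₁), lt_min one_pos (div_pos hρ ht₁0), ?_⟩
  intro τ hτ hττ₀
  have hτ1 : τ ≤ 1 := hττ₀.trans (min_le_left _ _)
  have hτt₁ : τ * t₁ ≤ ρ := by
    have := hττ₀.trans (min_le_right _ _)
    calc τ * t₁ ≤ (ρ / t₁) * t₁ := mul_le_mul_of_nonneg_right this ht₁0.le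
      _ = ρ := by field_simp
  set S : Set (Fin d → ℝ) := {u : Fin d → ℝ | ρ < τ * l1 u} with hSdef
  have hS_meas : MeasurableSet S :=
    measurableSet_lt measurable_const (measurable_const.mul l1_measurable)
  set F : (Fin d → ℝ) → (Fin m → ℝ) :=
    fun u => (Real.exp (ℓ (θ + τ • u) - ℓ θ) * κ u) • h (τ • u) with hFdef
  -- Pointwise bound on S
  have hpt : ∀ u ∈ S, ‖F u‖ ≤ (C₁ * τ ^ N) * (1 + ‖u‖) ^ (-r) := by
    intro u hu
    have hu' : ρ < τ * l1 u := hu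
    set t : ℝ := l1 u with htdef
    have ht0 : 0 ≤ t := l1_nonneg u
    have htt₁ : t₁ < t := by
      by_contra hcon
      push_neg at hcon
      have : τ * t ≤ τ * t₁ := mul_le_mul_of_nonneg_left hcon hτ.le
      linarith
    have ht1 : 1 < t := lt_of_le_of_lt ht₁1 htt₁
    have htpos : 0 < t := lt_trans one_pos ht1
    have htM : M < t := lt_of_le_of_lt ((le_max_left M _).trans (le_max_right 1 _)) htt₁
    have htρτ : ρ / τ ≤ t := by
      rw [div_le_iff₀ hτ]
      nlinarith
    -- ε t^η ≤ γ/2 t^δ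
    have hsle : (2 * ε / γ) ^ (1 / (δ - η)) ≤ t :=
      ((le_max_right M _).trans (le_max_right 1 _)).trans htt₁.le
    have h2eg : 2 * ε / γ ≤ t ^ (δ - η) := by
      have hq : ((2 * ε / γ) ^ (1 / (δ - η))) ^ (δ - η) = 2 * ε / γ := by
        rw [← Real.rpow_mul (by positivity), one_div, inv_mul_cancel₀ hδη.ne', Real.rpow_one]
      calc 2 * ε / γ = ((2 * ε / γ) ^ (1 / (δ - η))) ^ (δ - η) := hq.symm
        _ ≤ t ^ (δ - η) := Real.rpow_le_rpow (Real.rpow_nonneg (by positivity) _) hsle hδη.le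
    have hεη : ε * t ^ η ≤ γ / 2 * t ^ δ := by
      have hsplit : t ^ δ = t ^ (δ - η) * t ^ η := by
        rw [← Real.rpow_add htpos]; ring_nf
      rw [hsplit]
      have h1 : 2 * ε ≤ t ^ (δ - η) * γ := (div_le_iff₀ hγ).mp h2eg
      have h2 : (0:ℝ) ≤ t ^ η := Real.rpow_nonneg ht0 η
      linarith [mul_le_mul_of_nonneg_right h1 h2]
    have hl1s : l1 (τ • u) = τ * t := by
      rw [l1_smul, abs_of_nonneg hτ.le]
    have hτtt : τ * t ≤ t := by nlinarith
    have hτt0 : 0 ≤ τ * t := by positivity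
    -- main chain
    have hnormle : ‖F u‖ ≤ (Real.exp (ℓ (θ + τ • u) - ℓ θ) * κ u) * (c * (τ * t) ^ α) := by
      have := norm_le_l1 (F u)
      have hfl1 : l1 (F u) = (Real.exp (ℓ (θ + τ • u) - ℓ θ) * κ u) * l1 (h (τ • u)) := by
        rw [hFdef]
        rw [l1_smul]
        congr 1
        exact abs_of_nonneg (mul_nonneg (Real.exp_nonneg _) (hκ_nonneg u))
      have hhb : l1 (h (τ • u)) ≤ c * (τ * t) ^ α := by
        have := hh (τ • u); rwa [hl1s] at this
      calc ‖F u‖ ≤ l1 (F u) := norm_le_l1 _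
        _ = (Real.exp (ℓ (θ + τ • u) - ℓ θ) * κ u) * l1 (h (τ • u)) := hfl1
        _ ≤ (Real.exp (ℓ (θ + τ • u) - ℓ θ) * κ u) * (c * (τ * t) ^ α) :=
            mul_le_mul_of_nonneg_left hhb (mul_nonneg (Real.exp_nonneg _) (hκ_nonneg u))
    have ha1 : Real.exp (ℓ (θ + τ • u) - ℓ θ) ≤
        D * Real.exp (ε * (τ * t) ^ η) * Real.exp (-ℓ θ) := by
      rw [Real.exp_sub, div_eq_mul_inv, ← Real.exp_neg]
      have hL' := hL (τ • u)
      rw [hl1s] at hL'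
      exact mul_le_mul_of_nonneg_right hL' (Real.exp_nonneg _)
    have ha2 : κ u ≤ Real.exp (-(γ * t ^ δ)) := by
      have := (hκ_tail u htM).le
      rwa [neg_mul] at this
    have hstep1 : ‖F u‖ ≤
        (D * Real.exp (ε * (τ * t) ^ η) * Real.exp (-ℓ θ) * Real.exp (-(γ * t ^ δ)))
          * (c * (τ * t) ^ α) := by
      refine hnormle.trans (mul_le_mul_of_nonneg_right ?_ (by positivity))
      exact mul_le_mul ha1 ha2 (hκ_nonneg u) (by positivity)
    -- bound the exponential product
    have hE : Real.exp (ε * (τ * t) ^ η) * Real.exp (-(γ * t ^ δ)) ≤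
        ((n.factorial : ℕ) : ℝ) * (2 / γ) ^ n * t ^ (-(δ * (n : ℝ))) := by
      rw [← Real.exp_add]
      have hτtη : (τ * t) ^ η ≤ t ^ η := Real.rpow_le_rpow hτt0 hτtt hη0.le
      have hexple : ε * (τ * t) ^ η + -(γ * t ^ δ) ≤ -(γ / 2 * t ^ δ) := by
        have := mul_le_mul_of_nonneg_left hτtη hε.le
        linarith
      refine (Real.exp_le_exp.mpr hexple).trans ?_
      set x : ℝ := γ / 2 * t ^ δ with hxdef
      have hx : 0 < x := by
        have : (0:ℝ) < t ^ δ := Real.rpow_pos_of_pos htpos δ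
        positivity
      have hxn : 0 < x ^ n := pow_pos hx n
      have hfact : (0:ℝ) < ((n.factorial : ℕ) : ℝ) := by positivity
      have hA : x ^ n ≤ Real.exp x * (n.factorial : ℝ) := by
        have := Real.pow_div_factorial_le_exp x hx.le n
        rw [div_le_iff₀ hfact] at this
        exact this
      have hBB : Real.exp (-x) ≤ ((n.factorial : ℕ) : ℝ) / x ^ n := by
        rw [le_div_iff₀ hxn]
        calc Real.exp (-x) * x ^ n ≤ Real.exp (-x) * (Real.exp x * (n.factorial : ℝ)) :=
              mul_le_mul_of_nonneg_left hA (Real.exp_nonneg _)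
          _ = ((n.factorial : ℕ) : ℝ) := by rw [← mul_assoc, ← Real.exp_add]; simp
      refine hBB.trans_eq ?_
      have hxpow : x ^ n = (γ / 2) ^ n * t ^ (δ * (n : ℝ)) := by
        rw [hxdef, mul_pow]
        congr 1
        rw [Real.rpow_mul ht0, Real.rpow_natCast]
      rw [hxpow, Real.rpow_neg ht0]
      rw [div_eq_mul_inv, mul_inv, ← mul_assoc]
      congr 2
      rw [← inv_pow, inv_div]
    -- combine
    have hτtα : (τ * t) ^ α ≤ t ^ α := Real.rpow_le_rpow hτt0 hτtt hα
    have hstep2 : ‖F u‖ ≤ K' * (t ^ α * t ^ (-(δ * (n : ℝ)))) := by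
      refine hstep1.trans ?_
      have heq : (D * Real.exp (ε * (τ * t) ^ η) * Real.exp (-ℓ θ) *
            Real.exp (-(γ * t ^ δ))) * (c * (τ * t) ^ α)
          = (c * D * Real.exp (-ℓ θ)) *
            ((Real.exp (ε * (τ * t) ^ η) * Real.exp (-(γ * t ^ δ))) * (τ * t) ^ α) := by ring
      rw [heq]
      have hmul : (Real.exp (ε * (τ * t) ^ η) * Real.exp (-(γ * t ^ δ))) * (τ * t) ^ α ≤
          (((n.factorial : ℕ) : ℝ) * (2 / γ) ^ n * t ^ (-(δ * (n : ℝ)))) * t ^ α := by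
        refine mul_le_mul hE hτtα (Real.rpow_nonneg hτt0 _) ?_
        have : (0:ℝ) ≤ t ^ (-(δ * (n : ℝ))) := Real.rpow_nonneg ht0 _
        positivity
      refine (mul_le_mul_of_nonneg_left hmul (by positivity)).trans_eq ?_
      rw [hK'def]; ring
    -- key power inequality
    have key : t ^ α * t ^ (-(δ * (n : ℝ))) ≤ ρ ^ (-N) * τ ^ N * t ^ (-r) := by
      have h1 : t ^ α * t ^ (-(δ * (n : ℝ))) = t ^ (α - δ * n + r) * t ^ (-r) := by
        rw [← Real.rpow_add htpos, ← Real.rpow_add htpos]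
        ring_nf
      rw [h1]
      have h2 : t ^ (α - δ * n + r) ≤ t ^ (-N) :=
        Real.rpow_le_rpow_of_exponent_le ht1.le (by linarith)
      have h3 : t ^ (-N) ≤ (ρ / τ) ^ (-N) :=
        Real.rpow_le_rpow_of_nonpos (div_pos hρ hτ) htρτ (neg_nonpos.mpr hN0)
      have h4 : (ρ / τ) ^ (-N) = ρ ^ (-N) * τ ^ N := by
        have hρN : ρ ^ N ≠ 0 := (Real.rpow_pos_of_pos hρ N).ne'
        have hτN : τ ^ N ≠ 0 := (Real.rpow_pos_of_pos hτ N).ne'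
        rw [Real.rpow_neg (div_pos hρ hτ).le, Real.div_rpow hρ.le hτ.le,
          Real.rpow_neg hρ.le]
        field_simp
      calc t ^ (α - δ * n + r) * t ^ (-r) ≤ (ρ / τ) ^ (-N) * t ^ (-r) :=
            mul_le_mul_of_nonneg_right (h2.trans h3) (Real.rpow_nonneg ht0 _)
        _ = ρ ^ (-N) * τ ^ N * t ^ (-r) := by rw [h4]
    -- translate to the (1+‖u‖)^(-r) bound
    have h2t : (2 : ℝ) ^ (-r) * t ^ (-r) ≤ (1 + ‖u‖) ^ (-r) := by
      have hub : 1 + ‖u‖ ≤ 2 * t := by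
        have := (norm_le_l1 u).trans_eq htdef.symm
        linarith
      have := Real.rpow_le_rpow_of_nonpos (by positivity) hub (neg_nonpos.mpr hr0.le)
      rwa [Real.mul_rpow (by norm_num) ht0] at this
    have h2r1 : (2:ℝ) ^ r * 2 ^ (-r) = 1 := by
      rw [← Real.rpow_add two_pos]; simp
    calc ‖F u‖ ≤ K' * (t ^ α * t ^ (-(δ * (n : ℝ)))) := hstep2
      _ ≤ K' * (ρ ^ (-N) * τ ^ N * t ^ (-r)) := mul_le_mul_of_nonneg_left key hK'0
      _ = (C₁ * τ ^ N) * ((2:ℝ) ^ (-r) * t ^ (-r)) := by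
          rw [hC₁def]
          have h2rp : (0:ℝ) < 2 ^ r := Real.rpow_pos_of_pos two_pos r
          linear_combination (-(K' * ρ ^ (-N) * τ ^ N * t ^ (-r))) * h2r1
      _ ≤ (C₁ * τ ^ N) * (1 + ‖u‖) ^ (-r) := by
          refine mul_le_mul_of_nonneg_left h2t ?_
          have : (0:ℝ) ≤ τ ^ N := Real.rpow_nonneg hτ.le N
          positivity
  -- integral chain
  have hgi : Integrable (fun u : Fin d → ℝ => (C₁ * τ ^ N) * (1 + ‖u‖) ^ (-r))
      (volume.restrict S) := (hint.const_mul _).restrict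
  have hCτN : (0:ℝ) ≤ C₁ * τ ^ N := mul_nonneg hC₁0 (Real.rpow_nonneg hτ.le N)
  calc l1 (∫ u in S, F u) ≤ m * ‖∫ u in S, F u‖ := l1_le_card _
    _ ≤ m * ∫ u in S, ‖F u‖ :=
        mul_le_mul_of_nonneg_left (norm_integral_le_integral_norm _) (Nat.cast_nonneg m)
    _ ≤ m * ∫ u in S, (C₁ * τ ^ N) * (1 + ‖u‖) ^ (-r) := by
        refine mul_le_mul_of_nonneg_left ?_ (Nat.cast_nonneg m)
        refine integral_mono_of_nonneg (ae_of_all _ fun u => norm_nonneg _) hgi ?_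
        exact (ae_restrict_iff' hS_meas).mpr (ae_of_all _ hpt)
    _ = m * ((C₁ * τ ^ N) * ∫ u in S, (1 + ‖u‖) ^ (-r)) := by
        rw [integral_const_mul]
    _ ≤ m * ((C₁ * τ ^ N) * I) := by
        refine mul_le_mul_of_nonneg_left (mul_le_mul_of_nonneg_left ?_ hCτN) (Nat.cast_nonneg m)
        exact setIntegral_le_integral hint
          (ae_of_all _ fun u => Real.rpow_nonneg (by positivity) _)
    _ = ((m : ℝ) * C₁ * I) * τ ^ N := by ring
    _ ≤ ((m : ℝ) * C₁ * I) * τ ^ μ := by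
        refine mul_le_mul_of_nonneg_left
          (Real.rpow_le_rpow_of_exponent_ge hτ hτ1 hμN) (by positivity)
end
end

section
/- Let (Ω, F, P) be a probability space, G ⊆ F a sub-σ-algebra, and U, V : Ω → ℝ^d integrable random vectors such that U is G-measurable, U V^T is integrable, |U| ≤ d₀ almost surely for some d₀ < ∞ (L¹ norm), and | E[V | G] − E[V] | ≤ b almost surely for some b < ∞. Then | E[U V^T] − E[U] (E[V])^T | ≤ d₀ b, where the left-hand side is the L¹ norm (sum of absolute values of entries) of the d×d covariance matrix Cov(U,V). -/
open MeasureTheory Real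

noncomputable section

/-- L¹ norm of a square matrix (sum of absolute values of entries). -/
def l1m {n : ℕ} (A : Matrix (Fin n) (Fin n) ℝ) : ℝ := ∑ i, ∑ j, |A i j|


/-- Coordinate of a Bochner integral of an `ℝ^d`-valued function. -/
lemma integral_coord {Ω : Type*} [mΩ : MeasurableSpace Ω] {d : ℕ} (μ : Measure Ω)
    {f : Ω → Fin d → ℝ} (hf : Integrable f μ) (j : Fin d) :
    (∫ ω, f ω ∂μ) j = ∫ ω, f ω j ∂μ := by
  have := (ContinuousLinearMap.proj j : (Fin d → ℝ) →L[ℝ] ℝ).integral_comp_comm hf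
  simpa using this.symm

/-- The coordinates of the vector-valued conditional expectation are the conditional
expectations of the coordinates. -/
lemma condexp_coord {Ω : Type*} (G : MeasurableSpace Ω) [m0 : MeasurableSpace Ω]
    (μ : Measure Ω) [IsFiniteMeasure μ] {d : ℕ} (hG : G ≤ m0)
    (V : Ω → Fin d → ℝ) (hV_int : Integrable V μ) (j : Fin d) :
    (fun ω => (μ[V|G]) ω j) =ᵐ[μ] μ[fun ω => V ω j|G] := by
  have hcint : Integrable (μ[V|G]) μ := integrable_condExp
  have hcj : Integrable (fun ω => (μ[V|G]) ω j) μ := by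
    have := (ContinuousLinearMap.proj j : (Fin d → ℝ) →L[ℝ] ℝ).integrable_comp hcint
    simpa [Function.comp] using this
  have hVj : Integrable (fun ω => V ω j) μ := by
    have := (ContinuousLinearMap.proj j : (Fin d → ℝ) →L[ℝ] ℝ).integrable_comp hV_int
    simpa [Function.comp] using this
  refine ae_eq_condExp_of_forall_setIntegral_eq (μ := μ) (f := fun ω => V ω j)
    (g := fun ω => (μ[V|G]) ω j) hG hVj
    (fun s hs hμs => hcj.mono_measure Measure.restrict_le_self)
    (fun s hs hμs => ?_) ?_
  · rw [← integral_coord (μ.restrict s) (hcint.mono_measure Measure.restrict_le_self) j,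
      ← integral_coord (μ.restrict s) (hV_int.mono_measure Measure.restrict_le_self) j,
      setIntegral_condExp hG hV_int hs]
  · exact StronglyMeasurable.aestronglyMeasurable
      ((continuous_apply j).comp_stronglyMeasurable stronglyMeasurable_condExp)

/-- Covariance contraction step: if `U` is `G`-measurable with `|U| ≤ d₀` a.s. and
`|E[V|G] − E[V]| ≤ b` a.s., then `|E[UVᵀ] − E[U]E[V]ᵀ| ≤ d₀ b`. -/
theorem stmt_12 {Ω : Type*} [m0 : MeasurableSpace Ω] (μ : Measure Ω)
    [IsProbabilityMeasure μ] {d : ℕ}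
    (G : MeasurableSpace Ω) (hG : G ≤ m0)
    (U V : Ω → Fin d → ℝ)
    (hU_meas : StronglyMeasurable[G] U)
    (hU_int : Integrable U μ) (hV_int : Integrable V μ)
    (hUV_int : ∀ i j, Integrable (fun ω => U ω i * V ω j) μ)
    (d0 b : ℝ)
    (hU_bd : ∀ᵐ ω ∂μ, l1 (U ω) ≤ d0)
    (hcond : ∀ᵐ ω ∂μ, l1 ((μ[V|G]) ω - ∫ ω', V ω' ∂μ) ≤ b) :
    l1m (Matrix.of fun i j : Fin d =>
          (∫ ω, U ω i * V ω j ∂μ) - (∫ ω, U ω i ∂μ) * (∫ ω, V ω j ∂μ))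
      ≤ d0 * b := by
  classical
  set c : Ω → Fin d → ℝ := μ[V|G] with hc
  set EV : Fin d → ℝ := ∫ ω', V ω' ∂μ with hEV
  set D : Ω → Fin d → ℝ := fun ω => c ω - EV with hD
  have hproj : ∀ j : Fin d, ∀ f : Ω → Fin d → ℝ,
      (ContinuousLinearMap.proj j : (Fin d → ℝ) →L[ℝ] ℝ) ∘ f = fun ω => f ω j := by
    intro j f; ext ω; simp
  -- coordinate integrability
  have hVj : ∀ j, Integrable (fun ω => V ω j) μ := fun j => by
    have := (ContinuousLinearMap.proj j : (Fin d → ℝ) →L[ℝ] ℝ).integrable_comp hV_int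
    simpa [Function.comp] using this
  have hUj : ∀ i, Integrable (fun ω => U ω i) μ := fun i => by
    have := (ContinuousLinearMap.proj i : (Fin d → ℝ) →L[ℝ] ℝ).integrable_comp hU_int
    simpa [Function.comp] using this
  have hcint : Integrable c μ := integrable_condExp
  have hcj : ∀ j, Integrable (fun ω => c ω j) μ := fun j => by
    have := (ContinuousLinearMap.proj j : (Fin d → ℝ) →L[ℝ] ℝ).integrable_comp hcint
    simpa [Function.comp] using this
  have hDj : ∀ j, Integrable (fun ω => D ω j) μ := fun j => by
    have : Integrable (fun ω => c ω j - EV j) μ := (hcj j).sub (integrable_const _)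
    simpa [hD, Pi.sub_apply] using this
  -- coordinate bound for U
  have hUibd : ∀ i, ∀ᵐ ω ∂μ, ‖U ω i‖ ≤ d0 := by
    intro i
    filter_upwards [hU_bd] with ω h
    have : |U ω i| ≤ l1 (U ω) :=
      Finset.single_le_sum (f := fun k => |U ω k|) (fun _ _ => abs_nonneg _) (Finset.mem_univ i)
    simpa [Real.norm_eq_abs] using this.trans h
  have hUiG : ∀ i, StronglyMeasurable[G] (fun ω => U ω i) := fun i =>
    (continuous_apply i).comp_stronglyMeasurable hU_meas
  -- coordinate of the vector conditional expectation
  have hcoord : ∀ j, (fun ω => c ω j) =ᵐ[μ] μ[fun ω => V ω j|G] := fun j =>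
    condexp_coord (m0 := m0) G μ hG V hV_int j
  have hEVj : ∀ j, EV j = ∫ ω, V ω j ∂μ := fun j => integral_coord (mΩ := m0) μ hV_int j
  -- integrability of products with c
  have hUc : ∀ i j, Integrable (fun ω => U ω i * c ω j) μ := fun i j =>
    (hcj j).bdd_mul ((hUiG i).mono hG).aestronglyMeasurable (hUibd i)
  have hUD : ∀ i j, Integrable (fun ω => U ω i * D ω j) μ := fun i j =>
    (hDj j).bdd_mul ((hUiG i).mono hG).aestronglyMeasurable (hUibd i)
  -- pull-out property
  have hpull : ∀ i j, ∫ ω, U ω i * V ω j ∂μ = ∫ ω, U ω i * c ω j ∂μ := by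
    intro i j
    have h1 : μ[(fun ω => U ω i) * fun ω => V ω j|G]
        =ᵐ[μ] (fun ω => U ω i) * μ[fun ω => V ω j|G] :=
      condExp_stronglyMeasurable_mul_of_bound hG (hUiG i) (hVj j) d0 (hUibd i)
    rw [show ∫ ω, U ω i * V ω j ∂μ = ∫ ω, ((fun ω => U ω i) * fun ω => V ω j) ω ∂μ from rfl,
      ← integral_condExp hG, integral_congr_ae h1]
    refine integral_congr_ae ?_
    filter_upwards [hcoord j] with ω hω
    simp [Pi.mul_apply, hω]
  -- key identity for each entry
  have hkey : ∀ i j, (∫ ω, U ω i * V ω j ∂μ) - (∫ ω, U ω i ∂μ) * (∫ ω, V ω j ∂μ)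
      = ∫ ω, U ω i * D ω j ∂μ := by
    intro i j
    have : ∫ ω, U ω i * D ω j ∂μ
        = ∫ ω, (U ω i * c ω j - U ω i * EV j) ∂μ := by
      refine integral_congr_ae (Filter.Eventually.of_forall fun ω => ?_)
      simp [hD, Pi.sub_apply, mul_sub]
    rw [this, integral_sub (hUc i j) ((hUj i).mul_const _), ← hpull i j,
      integral_mul_const, hEVj j]
  -- a.e. bound for the sum of absolute values
  have habs : ∀ᵐ ω ∂μ, ∑ i, ∑ j, |U ω i * D ω j| ≤ d0 * b := by
    filter_upwards [hU_bd, hcond] with ω h1 h2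
    have hl1U : (0:ℝ) ≤ l1 (U ω) := Finset.sum_nonneg fun _ _ => abs_nonneg _
    have hl1D : (0:ℝ) ≤ l1 (D ω) := Finset.sum_nonneg fun _ _ => abs_nonneg _
    have heq : ∑ i, ∑ j, |U ω i * D ω j| = l1 (U ω) * l1 (D ω) := by
      rw [l1, l1, Finset.sum_mul_sum]
      exact Finset.sum_congr rfl fun i _ => Finset.sum_congr rfl fun j _ => (abs_mul _ _)
    rw [heq]
    have h2' : l1 (D ω) ≤ b := h2
    exact mul_le_mul h1 h2' hl1D (hl1U.trans h1)
  -- integrability of the sum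
  have hsum_int : Integrable (fun ω => ∑ i, ∑ j, |U ω i * D ω j|) μ := by
    apply integrable_finset_sum
    intro i _
    apply integrable_finset_sum
    intro j _
    exact (hUD i j).abs
  -- conclude
  have hfinal : ∑ i, ∑ j, |∫ ω, U ω i * D ω j ∂μ| ≤ d0 * b := by
    have step1 : ∑ i, ∑ j, |∫ ω, U ω i * D ω j ∂μ|
        ≤ ∑ i, ∑ j, ∫ ω, |U ω i * D ω j| ∂μ := by
      refine Finset.sum_le_sum fun i _ => Finset.sum_le_sum fun j _ => ?_
      simp only [← Real.norm_eq_abs]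
      exact norm_integral_le_integral_norm _
    have step2 : ∑ i, ∑ j, ∫ ω, |U ω i * D ω j| ∂μ
        = ∫ ω, ∑ i, ∑ j, |U ω i * D ω j| ∂μ := by
      rw [integral_finset_sum _ (fun i _ => integrable_finset_sum _ fun j _ => (hUD i j).abs)]
      exact Finset.sum_congr rfl fun i _ =>
        (integral_finset_sum _ (fun j _ => (hUD i j).abs)).symm
    have step3 : ∫ ω, ∑ i, ∑ j, |U ω i * D ω j| ∂μ ≤ ∫ _ω, d0 * b ∂μ :=
      integral_mono_ae hsum_int (integrable_const _) habs
    have step4 : ∫ _ω, d0 * b ∂μ = d0 * b := by simp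
    calc ∑ i, ∑ j, |∫ ω, U ω i * D ω j ∂μ|
        ≤ ∑ i, ∑ j, ∫ ω, |U ω i * D ω j| ∂μ := step1
      _ = ∫ ω, ∑ i, ∑ j, |U ω i * D ω j| ∂μ := step2
      _ ≤ ∫ _ω, d0 * b ∂μ := step3
      _ = d0 * b := step4
  calc l1m (Matrix.of fun i j : Fin d =>
          (∫ ω, U ω i * V ω j ∂μ) - (∫ ω, U ω i ∂μ) * (∫ ω, V ω j ∂μ))
      = ∑ i, ∑ j, |∫ ω, U ω i * D ω j ∂μ| := by
        rw [l1m]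
        exact Finset.sum_congr rfl fun i _ => Finset.sum_congr rfl fun j _ => by
          rw [Matrix.of_apply, hkey i j]
    _ ≤ d0 * b := hfinal
end
end
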